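/- Three closed disks of common radius ρ < (√3/2)·R cannot cover a closed disk of radius R in the plane; equivalently, the minimum radius for which three equal disks can cover a disk of radius R is (√3/2)·R. -/

import Mathlib

open Metric Real

/-- Combinatorial pigeonhole on a discrete circle: any 3-coloring of `{0,...,3k}`
has a monochromatic pair at "circular distance" at least `k`. -/
lemma three_color_pair (k : ℕ) (hk : 1 ≤ k) (f : ℕ → Fin 3) :
    ∃ i j : ℕ, i < j ∧ j < 3 * k + 1 ∧ f i = f j ∧ k ≤ j - i ∧ j - i ≤ 2 * k + 1 := by
  by_contra hcon
  push_neg at hcon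
  set n := 3 * k + 1 with hn
  have H : ∀ i j : ℕ, i < j → j < n → f i = f j → j - i < k ∨ 2 * k + 1 < j - i := by
    intro i j hij hjn hf
    rcases lt_or_ge (j - i) k with h | h
    · exact Or.inl h
    · exact Or.inr (hcon i j hij hjn hf h)
  have hcard : ∀ c : Fin 3, ((Finset.range n).filter (fun j => f j = c)).card ≤ k := by
    intro c
    set S := (Finset.range n).filter (fun j => f j = c) with hS
    rcases S.eq_empty_or_nonempty with he | hne
    · simp [he]
    · set a := S.min' hne with ha
      have haS : a ∈ S := S.min'_mem hne
      have hmem : ∀ s ∈ S, a ≤ s ∧ s < n ∧ f s = c := by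
        intro s hs
        refine ⟨S.min'_le s hs, ?_, ?_⟩
        · exact Finset.mem_range.1 (Finset.mem_filter.1 hs).1
        · exact (Finset.mem_filter.1 hs).2
      have hdich : ∀ s ∈ S, a < s → s - a < k ∨ 2 * k + 1 < s - a := by
        intro s hs hlt
        obtain ⟨_, hsn, hfs⟩ := hmem s hs
        have hfa : f a = c := (hmem a haS).2.2
        exact H a s hlt hsn (hfa.trans hfs.symm)
      have : S.card ≤ (Finset.range k).card := by
        apply Finset.card_le_card_of_injOn (fun s => if s < a + k then s - a else s - a - (2 * k + 1))
        · intro s hs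
          obtain ⟨has, hsn, _⟩ := hmem s hs
          simp only [Finset.mem_coe, Finset.mem_range]
          rcases eq_or_lt_of_le has with rfl | hlt
          · split <;> omega
          · rcases hdich s hs hlt with h | h
            · split <;> omega
            · split <;> omega
        · intro s hsS t htS hg
          simp only at hg
          obtain ⟨has, hsn, _⟩ := hmem s hsS
          obtain ⟨hat, htn, _⟩ := hmem t htS
          have hds : a = s ∨ s - a < k ∨ 2 * k + 1 < s - a := by
            rcases eq_or_lt_of_le has with h | h
            · exact Or.inl h
            · exact Or.inr (hdich s hsS h)
          have hdt : a = t ∨ t - a < k ∨ 2 * k + 1 < t - a := by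
            rcases eq_or_lt_of_le hat with h | h
            · exact Or.inl h
            · exact Or.inr (hdich t htS h)
          by_cases h1 : s < a + k <;> by_cases h2 : t < a + k <;>
            simp only [h1, h2, if_true, if_false] at hg
          · omega
          · -- s low, t high: t - s = 2k+1, contradiction with H s t
            exfalso
            have hst : s < t := by omega
            have hts : t - s = 2 * k + 1 := by omega
            have hfst : f s = f t := by
              obtain ⟨_, _, hfs⟩ := hmem s hsS
              obtain ⟨_, _, hft⟩ := hmem t htS
              rw [hfs, hft]
            rcases H s t hst htn hfst with h | h <;> omega
          · exfalso
            have hst : t < s := by omega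
            have hts : s - t = 2 * k + 1 := by omega
            have hfst : f t = f s := by
              obtain ⟨_, _, hfs⟩ := hmem s hsS
              obtain ⟨_, _, hft⟩ := hmem t htS
              rw [hfs, hft]
            rcases H t s hst hsn hfst with h | h <;> omega
          · omega
      simpa using this
  have hsum : (Finset.range n).card = ∑ c : Fin 3, ((Finset.range n).filter (fun j => f j = c)).card :=
    Finset.card_eq_sum_card_fiberwise (fun x _ => Finset.mem_univ (f x))
  have : n ≤ 3 * k := by
    rw [Finset.card_range] at hsum
    have hb : ∑ c : Fin 3, ((Finset.range n).filter (fun j => f j = c)).card ≤ ∑ _c : Fin 3, k :=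
      Finset.sum_le_sum (fun c _ => hcard c)
    simp at hb
    omega
  omega

noncomputable def diskPt (R θ : ℝ) : EuclideanSpace ℝ (Fin 2) := !₂[R * Real.cos θ, R * Real.sin θ]

lemma sin_half_sq (t : ℝ) : Real.sin (t / 2) ^ 2 = 1 / 2 - Real.cos t / 2 := by
  have h := Real.sin_sq_eq_half_sub (t / 2)
  have h2 : 2 * (t / 2) = t := by ring
  rw [h2] at h
  linarith

lemma diskPt_dist_sq (R a b : ℝ) :
    dist (diskPt R a) (diskPt R b) ^ 2 = 4 * R ^ 2 * Real.sin ((a - b) / 2) ^ 2 := by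
  rw [EuclideanSpace.dist_eq, Real.sq_sqrt (by positivity)]
  simp only [diskPt, PiLp.toLp_apply, Matrix.cons_val_zero, Matrix.cons_val_one, Matrix.head_cons, Real.dist_eq,
    sq_abs]
  have h1 := Real.cos_sq_add_sin_sq a
  have h2 := Real.cos_sq_add_sin_sq b
  have h3 := Real.cos_sub a b
  have h4 := sin_half_sq (a - b)
  rw [Fin.sum_univ_two]
  simp only [Matrix.cons_val_zero, Matrix.cons_val_one, Matrix.head_cons]
  linear_combination (R^2) * h1 + (R^2) * h2 + (2*R^2) * h3 - (4*R^2) * h4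

lemma diskPt_mem (R θ : ℝ) (hR : 0 ≤ R) : diskPt R θ ∈ closedBall (0 : EuclideanSpace ℝ (Fin 2)) R := by
  rw [mem_closedBall, EuclideanSpace.dist_eq]
  have h0 : ∀ i : Fin 2, (0 : EuclideanSpace ℝ (Fin 2)) i = 0 := fun i => rfl
  rw [Fin.sum_univ_two, h0 0, h0 1]
  simp only [diskPt, PiLp.toLp_apply, Matrix.cons_val_zero, Matrix.cons_val_one, Matrix.head_cons, Real.dist_eq]
  have he : |R * Real.cos θ - 0| ^ 2 + |R * Real.sin θ - 0| ^ 2 = R ^ 2 := by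
    rw [sq_abs, sq_abs]
    nlinarith [Real.cos_sq_add_sin_sq θ]
  rw [he, Real.sqrt_sq hR]

/-- Sector covering lemma for the construction. -/
lemma sector_cover (R x y ux uy : ℝ) (hR : 0 < R) (hu : ux ^ 2 + uy ^ 2 = 1)
    (hxy : x ^ 2 + y ^ 2 ≤ R ^ 2)
    (hin : Real.sqrt (x ^ 2 + y ^ 2) / 2 ≤ x * ux + y * uy) :
    (x - R / 2 * ux) ^ 2 + (y - R / 2 * uy) ^ 2 ≤ 3 / 4 * R ^ 2 := by
  set r := Real.sqrt (x ^ 2 + y ^ 2) with hr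
  have hr0 : 0 ≤ r := Real.sqrt_nonneg _
  have hr2 : r ^ 2 = x ^ 2 + y ^ 2 := Real.sq_sqrt (by positivity)
  have hrR : r ≤ R := by
    rw [hr]
    calc Real.sqrt (x ^ 2 + y ^ 2) ≤ Real.sqrt (R ^ 2) := Real.sqrt_le_sqrt hxy
    _ = R := Real.sqrt_sq hR.le
  nlinarith [mul_le_mul_of_nonneg_left hin (le_of_lt hR), mul_nonneg (sub_nonneg.2 hrR) (by linarith : (0:ℝ) ≤ r + R / 2)]

set_option maxHeartbeats 1000000 in
theorem three_disk_covering (R : ℝ) (hR : 0 < R) :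
    (∀ ρ : ℝ, ρ < Real.sqrt 3 / 2 * R →
      ∀ c : Fin 3 → EuclideanSpace ℝ (Fin 2),
        ¬ (closedBall (0 : EuclideanSpace ℝ (Fin 2)) R ⊆ ⋃ i, closedBall (c i) ρ)) ∧
    (∃ c : Fin 3 → EuclideanSpace ℝ (Fin 2),
      closedBall (0 : EuclideanSpace ℝ (Fin 2)) R ⊆
        ⋃ i, closedBall (c i) (Real.sqrt 3 / 2 * R)) := by
  have s3 : Real.sqrt 3 ^ 2 = 3 := Real.sq_sqrt (by norm_num)
  have s30 : (0:ℝ) ≤ Real.sqrt 3 := Real.sqrt_nonneg 3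
  have hπ0 : 0 < π := Real.pi_pos
  constructor
  · -- impossibility part
    intro ρ hρ c hcov
    have hε0 : 0 < Real.sqrt 3 / 2 * R - ρ := by linarith
    -- choose k
    obtain ⟨k0, hk0⟩ := exists_nat_gt (π * R / (3 * (Real.sqrt 3 / 2 * R - ρ)))
    set k := k0 + 1 with hkdef
    have hk1 : 1 ≤ k := by omega
    set n := 3 * k + 1 with hndef
    have hncast : (n:ℝ) = 3 * (k:ℝ) + 1 := by rw [hndef]; push_cast; ring
    have hn0 : (0:ℝ) < (n : ℝ) := by rw [hncast]; positivity
    -- the coloring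
    have hchoose : ∀ j : ℕ, ∃ i : Fin 3, diskPt R (2 * π * j / n) ∈ closedBall (c i) ρ := by
      intro j
      exact Set.mem_iUnion.1 (hcov (diskPt_mem R _ hR.le))
    choose f hf using hchoose
    obtain ⟨i, j, hij, hjn, hfij, hk_le, hle⟩ := three_color_pair k hk1 f
    -- distances
    have hρ0 : 0 ≤ ρ := le_trans dist_nonneg (hf 0)
    have htri : dist (diskPt R (2 * π * i / n)) (diskPt R (2 * π * j / n)) ≤ 2 * ρ := by
      have h2 : dist (c (f i)) (diskPt R (2 * π * j / n)) ≤ ρ := by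
        rw [dist_comm, hfij]; exact hf j
      calc dist (diskPt R (2 * π * i / n)) (diskPt R (2 * π * j / n))
          ≤ dist (diskPt R (2 * π * i / n)) (c (f i)) + dist (c (f i)) (diskPt R (2 * π * j / n)) :=
            dist_triangle _ _ _
      _ ≤ ρ + ρ := add_le_add (hf i) h2
      _ = 2 * ρ := by ring
    set m := j - i with hm
    have hmcast : ((j:ℝ) - i) = (m : ℝ) := by
      rw [hm, Nat.cast_sub hij.le]
    have hmk : (k:ℝ) ≤ (m:ℝ) := Nat.cast_le.2 hk_le
    have hmk2 : (m:ℝ) ≤ 2 * (k:ℝ) + 1 := by exact_mod_cast hle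
    -- the half-angle
    set d := π * m / n with hd
    have hdeq : (2 * π * i / n - 2 * π * j / n) / 2 = -d := by
      rw [hd, ← hmcast]; ring
    have hdist_sq : dist (diskPt R (2 * π * i / n)) (diskPt R (2 * π * j / n)) ^ 2
        = 4 * R ^ 2 * Real.sin d ^ 2 := by
      rw [diskPt_dist_sq, hdeq, Real.sin_neg]
      ring
    -- angle bounds
    set θ := π * k / n with hθ
    have hθ0 : 0 < θ := by
      rw [hθ]
      have : (0:ℝ) < (k:ℝ) := by exact_mod_cast hk1
      positivity
    have hθ3 : θ ≤ π / 3 := by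
      rw [hθ, div_le_div_iff₀ hn0 (by norm_num)]
      nlinarith [hncast, hπ0]
    have hdlb : θ ≤ d := by
      rw [hθ, hd]
      gcongr
    have hdub : d ≤ π - θ := by
      rw [hd, hθ]
      rw [le_sub_iff_add_le, ← add_div, div_le_iff₀ hn0]
      nlinarith [hmk2, hncast, hπ0]
    have hsin_d : Real.sin θ ≤ Real.sin d := by
      rcases le_or_gt d (π / 2) with h | h
      · exact Real.sin_le_sin_of_le_of_le_pi_div_two (by linarith) h hdlb
      · rw [← Real.sin_pi_sub d]
        exact Real.sin_le_sin_of_le_of_le_pi_div_two (by linarith) (by linarith) (by linarith)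
    -- lower bound on sin θ
    have h3k : (3 * (k:ℝ) + 1) ≠ 0 := by positivity
    have hθval : π / 3 - θ = π / (3 * n) := by
      rw [hθ, hncast]
      field_simp
      ring
    have hlip : Real.sin (π / 3) - Real.sin θ ≤ π / (3 * n) := by
      rw [Real.sin_sub_sin]
      have hu0 : 0 ≤ (π / 3 - θ) / 2 := by linarith
      have huπ : (π / 3 - θ) / 2 ≤ π := by linarith
      nlinarith [Real.sin_le hu0, Real.sin_nonneg_of_nonneg_of_le_pi hu0 huπ,
        Real.cos_le_one ((π / 3 + θ) / 2), Real.neg_one_le_cos ((π / 3 + θ) / 2), hθval]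
    -- choice of k makes π/(3n) small
    have hk0n : (k0 : ℝ) ≤ (n : ℝ) := by
      have : k0 ≤ n := by omega
      exact_mod_cast this
    have hsmall : π / (3 * (n:ℝ)) * R < Real.sqrt 3 / 2 * R - ρ := by
      have h5 : π * R < (k0:ℝ) * (3 * (Real.sqrt 3 / 2 * R - ρ)) :=
        (div_lt_iff₀ (by positivity)).1 hk0
      rw [div_mul_eq_mul_div, div_lt_iff₀ (by positivity)]
      nlinarith [h5, hk0n, hε0]
    have hsinθ : ρ / R < Real.sin θ := by
      have h7 : ρ / R < Real.sqrt 3 / 2 - π / (3 * (n:ℝ)) := by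
        rw [div_lt_iff₀ hR]
        nlinarith [hsmall]
      have h8 : Real.sqrt 3 / 2 - π / (3 * (n:ℝ)) ≤ Real.sin θ := by
        have := Real.sin_pi_div_three
        linarith [hlip]
      linarith
    -- contradiction
    have hsind_pos : 0 < Real.sin d :=
      Real.sin_pos_of_pos_of_lt_pi (lt_of_lt_of_le hθ0 hdlb) (by linarith)
    have hsq : 4 * R ^ 2 * Real.sin d ^ 2 ≤ 4 * ρ ^ 2 := by
      rw [← hdist_sq]
      nlinarith [dist_nonneg (x := diskPt R (2 * π * i / n)) (y := diskPt R (2 * π * j / n)), htri, hρ0]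
    have h9 : R * Real.sin d ≤ ρ := by
      nlinarith [hsq, mul_pos hR hsind_pos, hρ0]
    have h10 : ρ < R * Real.sin θ := by
      rw [div_lt_iff₀ hR] at hsinθ
      linarith
    linarith [mul_le_mul_of_nonneg_left hsin_d hR.le]
  · -- construction part
    refine ⟨![!₂[0, R / 2], !₂[-(Real.sqrt 3 / 4 * R), -(R / 4)], !₂[Real.sqrt 3 / 4 * R, -(R / 4)]], ?_⟩
    intro p hp
    set x := p 0 with hx
    set y := p 1 with hy
    have hdist : dist p (0 : EuclideanSpace ℝ (Fin 2)) = Real.sqrt (x ^ 2 + y ^ 2) := by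
      rw [EuclideanSpace.dist_eq, Fin.sum_univ_two]
      have h0 : ∀ i : Fin 2, (0 : EuclideanSpace ℝ (Fin 2)) i = 0 := fun i => rfl
      rw [h0 0, h0 1]
      simp [Real.dist_eq, sq_abs, hx, hy]
    rw [mem_closedBall, hdist] at hp
    set r := Real.sqrt (x ^ 2 + y ^ 2) with hr
    have hr0 : 0 ≤ r := Real.sqrt_nonneg _
    have hr2 : r ^ 2 = x ^ 2 + y ^ 2 := Real.sq_sqrt (by positivity)
    have hxy : x ^ 2 + y ^ 2 ≤ R ^ 2 := by nlinarith
    have hyr : -r ≤ y := by nlinarith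
    -- choose the sector
    have hmax : ∃ i : Fin 3, ∃ ux uy : ℝ, ux ^ 2 + uy ^ 2 = 1 ∧ r / 2 ≤ x * ux + y * uy ∧
        (![!₂[0, R / 2], !₂[-(Real.sqrt 3 / 4 * R), -(R / 4)], !₂[Real.sqrt 3 / 4 * R, -(R / 4)]] : Fin 3 → EuclideanSpace ℝ (Fin 2)) i = !₂[R / 2 * ux, R / 2 * uy] := by
      rcases le_or_gt (r / 2) y with hcase | hcase
      · refine ⟨0, 0, 1, by norm_num, by linarith, ?_⟩
        ext w
        fin_cases w <;> norm_num
      · rcases le_or_gt 0 x with hxs | hxs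
        · refine ⟨2, Real.sqrt 3 / 2, -(1/2), by nlinarith, ?_, ?_⟩
          · have key : (r + y) ^ 2 ≤ 3 * x ^ 2 := by
              nlinarith [mul_nonneg (by linarith : (0:ℝ) ≤ r + y) (by linarith : (0:ℝ) ≤ r - 2 * y)]
            have h2 : r + y ≤ Real.sqrt 3 * x := by
              nlinarith [key, mul_nonneg s30 hxs, sq_nonneg (Real.sqrt 3 * x - (r + y)),
                sq_nonneg (Real.sqrt 3 * x + r + y)]
            linarith
          · ext w
            fin_cases w <;> norm_num [Matrix.cons_val_two] <;> ring
        · refine ⟨1, -(Real.sqrt 3 / 2), -(1/2), by nlinarith, ?_, ?_⟩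
          · have key : (r + y) ^ 2 ≤ 3 * x ^ 2 := by
              nlinarith [mul_nonneg (by linarith : (0:ℝ) ≤ r + y) (by linarith : (0:ℝ) ≤ r - 2 * y)]
            have h2 : r + y ≤ Real.sqrt 3 * (-x) := by
              nlinarith [key, mul_nonneg s30 (by linarith : (0:ℝ) ≤ -x),
                sq_nonneg (Real.sqrt 3 * (-x) - (r + y)), sq_nonneg (Real.sqrt 3 * (-x) + r + y)]
            linarith
          · ext w
            fin_cases w <;> norm_num <;> ring
    obtain ⟨i, ux, uy, hu, hin, hci⟩ := hmax
    apply Set.mem_iUnion.2 ⟨i, ?_⟩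
    rw [mem_closedBall, hci]
    have hkey := sector_cover R x y ux uy hR hu hxy hin
    rw [EuclideanSpace.dist_eq, Fin.sum_univ_two]
    have hc0 : (!₂[R / 2 * ux, R / 2 * uy] : EuclideanSpace ℝ (Fin 2)) 0 = R / 2 * ux := rfl
    have hc1 : (!₂[R / 2 * ux, R / 2 * uy] : EuclideanSpace ℝ (Fin 2)) 1 = R / 2 * uy := rfl
    rw [hc0, hc1]
    simp only [Real.dist_eq, sq_abs]
    have h34 : (x - R / 2 * ux) ^ 2 + (y - R / 2 * uy) ^ 2 ≤ (Real.sqrt 3 / 2 * R) ^ 2 := by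
      nlinarith
    rw [← hx, ← hy]
    calc Real.sqrt ((x - R / 2 * ux) ^ 2 + (y - R / 2 * uy) ^ 2)
        ≤ Real.sqrt ((Real.sqrt 3 / 2 * R) ^ 2) := Real.sqrt_le_sqrt h34
      _ = Real.sqrt 3 / 2 * R := Real.sqrt_sq (by positivity)
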